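/- In a balanced market with n men and n women, suppose every man m ranks every woman w within c₁·log n of her central-order rank, and every woman ranks every man within c₂·log n of his central-order rank (i.e., |r_m(w) − r(w)| ≤ c₁ log n and |r_w(m) − r(m)| ≤ c₂ log n for all m, w). Then for every stable matching μ and every matched pair (m,w) ∈ μ, |r(m) − r(w)| ≤ (c₁ + c₂)·log n + 2·max{2c₁, 2c₂}·log n. -/
import Mathlib

lemma key_disp {M W : Type*} [Fintype M] [Fintype W]
    (rcM : M ≃ Fin (Fintype.card M))
    (rM : M → W ≃ Fin (Fintype.card W)) (rW : W → M ≃ Fin (Fintype.card M))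
    (b : ℝ)
    (h₂ : ∀ (w : W) (m : M), |((rW w m : ℕ) : ℝ) - ((rcM m : ℕ) : ℝ)| ≤ b)
    (μ : M ≃ W)
    (hstable : ¬ ∃ (m : M) (w : W),
      (rM m w : ℕ) < (rM m (μ m) : ℕ) ∧ (rW w m : ℕ) < (rW w (μ.symm w) : ℕ))
    (m : M) (w : W) (hmw : μ m = w) :
    ((rM m w : ℕ) : ℝ) ≤ ((rW w m : ℕ) : ℝ) + 3 * b := by
  classical
  have hb : 0 ≤ b := le_trans (abs_nonneg _) (h₂ w m)
  push_neg at hstable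
  set k := ((rM m w : Fin (Fintype.card W)) : ℕ) with hkdef
  -- women m prefers to w
  set S : Finset W := Finset.univ.filter (fun w' => ((rM m w' : ℕ) < k)) with hS
  have hScard : S.card = k := by
    rw [show k = (Finset.range k).card from (Finset.card_range k).symm]
    refine Finset.card_bij' (fun w' _ => ((rM m w' : Fin _) : ℕ))
      (fun j hj => (rM m).symm ⟨j, lt_trans (Finset.mem_range.mp hj) (rM m w).isLt⟩)
      ?_ ?_ ?_ ?_
    · intro w' hw'
      simp only [hS, Finset.mem_filter] at hw'
      simpa using hw'.2
    · intro j hj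
      simp only [hS, Finset.mem_filter]
      exact ⟨Finset.mem_univ _, by simpa using Finset.mem_range.mp hj⟩
    · intro w' hw'
      simp
    · intro j hj
      simp
  -- the partners of those women, plus m itself
  set T : Finset M := insert m (S.image (fun w' => μ.symm w')) with hT
  have hmnot : m ∉ S.image (fun w' => μ.symm w') := by
    intro hmem
    obtain ⟨w', hw', heq⟩ := Finset.mem_image.mp hmem
    have : w' = w := by
      have := congrArg μ heq
      simpa [hmw] using this
    subst this
    simp only [hS, Finset.mem_filter] at hw'
    exact lt_irrefl _ hw'.2
  have hTcard : T.card = k + 1 := by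
    rw [hT, Finset.card_insert_of_notMem hmnot,
      Finset.card_image_of_injective _ μ.symm.injective, hScard]
  -- every element of T has small central rank
  have hbound : ∀ x ∈ T, ((rcM x : ℕ) : ℝ) ≤ ((rW w m : ℕ) : ℝ) + 3 * b := by
    intro x hx
    rw [hT, Finset.mem_insert] at hx
    rcases hx with rfl | hx
    · have := h₂ w x
      rw [abs_sub_le_iff] at this
      linarith [this.2]
    · obtain ⟨w', hw', rfl⟩ := Finset.mem_image.mp hx
      simp only [hS, Finset.mem_filter] at hw'
      have hpref : (rM m w' : ℕ) < (rM m (μ m) : ℕ) := by rw [hmw]; exact hw'.2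
      have hst := hstable m w' hpref
      have e1 := h₂ w' (μ.symm w')
      have e2 := h₂ w' m
      have e3 := h₂ w m
      rw [abs_sub_le_iff] at e1 e2 e3
      have hcast : ((rW w' (μ.symm w') : ℕ) : ℝ) ≤ ((rW w' m : ℕ) : ℝ) :=
        Nat.cast_le.mpr hst
      linarith [e1.1, e2.2, e3.1]
  -- a finset of k+1 elements with injective nat ranks has an element of rank ≥ k
  have hex : ∃ x ∈ T, k ≤ (rcM x : ℕ) := by
    by_contra h
    push_neg at h
    have hsub : T.image (fun x => ((rcM x : Fin _) : ℕ)) ⊆ Finset.range k := by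
      intro j hj
      obtain ⟨x, hx, rfl⟩ := Finset.mem_image.mp hj
      exact Finset.mem_range.mpr (h x hx)
    have hinj : Function.Injective (fun x : M => ((rcM x : Fin _) : ℕ)) := by
      intro a c hac
      exact rcM.injective (Fin.val_injective hac)
    have := Finset.card_le_card hsub
    rw [Finset.card_image_of_injective _ hinj, hTcard, Finset.card_range] at this
    omega
  obtain ⟨x, hxT, hxk⟩ := hex
  calc ((rM m w : ℕ) : ℝ) = (k : ℝ) := by rw [hkdef]
    _ ≤ ((rcM x : ℕ) : ℝ) := Nat.cast_le.mpr hxk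
    _ ≤ ((rW w m : ℕ) : ℝ) + 3 * b := hbound x hxT

/-- In a balanced market of size `n`, if every man ranks every woman within `c₁ * log n`
of her central-order rank and every woman ranks every man within `c₂ * log n` of his
central-order rank, then in every stable matching the central ranks of matched partners
differ by at most `(c₁ + c₂) * log n + 2 * max (2*c₁) (2*c₂) * log n`. -/
theorem stmt_9 {M W : Type*} [Fintype M] [Fintype W] (n : ℕ)
    (hM : Fintype.card M = n) (hW : Fintype.card W = n)
    (rcM : M ≃ Fin (Fintype.card M)) (rcW : W ≃ Fin (Fintype.card W))
    (rM : M → W ≃ Fin (Fintype.card W)) (rW : W → M ≃ Fin (Fintype.card M))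
    (c₁ c₂ : ℝ)
    (h₁ : ∀ (m : M) (w : W), |((rM m w : ℕ) : ℝ) - ((rcW w : ℕ) : ℝ)| ≤ c₁ * Real.log n)
    (h₂ : ∀ (w : W) (m : M), |((rW w m : ℕ) : ℝ) - ((rcM m : ℕ) : ℝ)| ≤ c₂ * Real.log n)
    (μ : M ≃ W)
    (hstable : ¬ ∃ (m : M) (w : W),
      (rM m w : ℕ) < (rM m (μ m) : ℕ) ∧ (rW w m : ℕ) < (rW w (μ.symm w) : ℕ))
    (m : M) (w : W) (hmw : μ m = w) :
    |((rcM m : ℕ) : ℝ) - ((rcW w : ℕ) : ℝ)| ≤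
      (c₁ + c₂) * Real.log n + 2 * max (2 * c₁) (2 * c₂) * Real.log n := by
  set L := Real.log n with hLdef
  have hn : 0 < n := hM ▸ Fintype.card_pos_iff.mpr ⟨m⟩
  have hL : 0 ≤ L := Real.log_nonneg (by exact_mod_cast hn)
  have hA : 0 ≤ c₁ * L := le_trans (abs_nonneg _) (h₁ m w)
  have hB : 0 ≤ c₂ * L := le_trans (abs_nonneg _) (h₂ w m)
  have K1 : ((rM m w : ℕ) : ℝ) ≤ ((rW w m : ℕ) : ℝ) + 3 * (c₂ * L) :=
    key_disp rcM rM rW (c₂ * L) h₂ μ hstable m w hmw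
  have hstable' : ¬ ∃ (w' : W) (m' : M),
      (rW w' m' : ℕ) < (rW w' (μ.symm w') : ℕ) ∧ (rM m' w' : ℕ) < (rM m' (μ.symm.symm m') : ℕ) := by
    rintro ⟨w', m', h1, h2⟩
    rw [Equiv.symm_symm] at h2
    exact hstable ⟨m', w', h2, h1⟩
  have hmw' : μ.symm w = m := (Equiv.symm_apply_eq μ).mpr hmw.symm
  have K2 : ((rW w m : ℕ) : ℝ) ≤ ((rM m w : ℕ) : ℝ) + 3 * (c₁ * L) :=
    key_disp rcW rW rM (c₁ * L) h₁ μ.symm hstable' w m hmw'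
  have hC1 : 4 * (c₁ * L) ≤ 2 * max (2 * c₁) (2 * c₂) * L := by
    have := le_max_left (2 * c₁) (2 * c₂)
    nlinarith
  have hC2 : 4 * (c₂ * L) ≤ 2 * max (2 * c₁) (2 * c₂) * L := by
    have := le_max_right (2 * c₁) (2 * c₂)
    nlinarith
  have e1 := h₁ m w
  have e2 := h₂ w m
  rw [abs_sub_le_iff] at e1 e2 ⊢
  constructor <;> linarith [e1.1, e1.2, e2.1, e2.2]
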